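/- On T*ℝ⁵, the potential V₂(q) = 2q₁q₄ - 2q₂q₃ + q₅² Poisson-commutes with each of M₁ = J₁₂ + J₃₄, M₂ = J₁₃ + J₂₄, M₃ = J₂₅ - J₃₅, M₄ = J₁₅ + J₄₅. -/

import Mathlib

noncomputable def pb {n : ℕ} (f g : (Fin n → ℝ) × (Fin n → ℝ) → ℝ)
    (x : (Fin n → ℝ) × (Fin n → ℝ)) : ℝ :=
  ∑ i : Fin n,
    (fderiv ℝ f x (Pi.single i 1, 0) * fderiv ℝ g x (0, Pi.single i 1)
      - fderiv ℝ f x (0, Pi.single i 1) * fderiv ℝ g x (Pi.single i 1, 0))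

noncomputable def J (i j : Fin 5) : (Fin 5 → ℝ) × (Fin 5 → ℝ) → ℝ :=
  fun x => x.1 i * x.2 j - x.1 j * x.2 i
noncomputable def M1 : (Fin 5 → ℝ) × (Fin 5 → ℝ) → ℝ := fun x => J 0 1 x + J 2 3 x
noncomputable def M2 : (Fin 5 → ℝ) × (Fin 5 → ℝ) → ℝ := fun x => J 0 2 x + J 1 3 x
noncomputable def M3 : (Fin 5 → ℝ) × (Fin 5 → ℝ) → ℝ := fun x => J 1 4 x - J 2 4 x
noncomputable def M4 : (Fin 5 → ℝ) × (Fin 5 → ℝ) → ℝ := fun x => J 0 4 x + J 3 4 x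

noncomputable def V2 : (Fin 5 → ℝ) × (Fin 5 → ℝ) → ℝ :=
  fun x => 2 * x.1 0 * x.1 3 - 2 * x.1 1 * x.1 2 + (x.1 4)^2

namespace aux

abbrev E := (Fin 5 → ℝ) × (Fin 5 → ℝ)

noncomputable def Q (i : Fin 5) : E →L[ℝ] ℝ :=
  (ContinuousLinearMap.proj i).comp (ContinuousLinearMap.fst ℝ (Fin 5 → ℝ) (Fin 5 → ℝ))
noncomputable def P (i : Fin 5) : E →L[ℝ] ℝ :=
  (ContinuousLinearMap.proj i).comp (ContinuousLinearMap.snd ℝ (Fin 5 → ℝ) (Fin 5 → ℝ))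

lemma hQ (i : Fin 5) (x : E) : HasFDerivAt (fun y : E => y.1 i) (Q i) x :=
  (Q i).hasFDerivAt

lemma hP (i : Fin 5) (x : E) : HasFDerivAt (fun y : E => y.2 i) (P i) x :=
  (P i).hasFDerivAt

lemma dV (x : E) (v : E) :
    fderiv ℝ V2 x v = 2 * x.1 3 * v.1 0 + 2 * x.1 0 * v.1 3
      - 2 * x.1 2 * v.1 1 - 2 * x.1 1 * v.1 2 + 2 * x.1 4 * v.1 4 := by
  have hVeq : V2 = fun y : E => (2 * y.1 0 * y.1 3 - 2 * y.1 1 * y.1 2) + y.1 4 * y.1 4 := by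
    funext y; simp [V2]; ring
  have h : HasFDerivAt (fun y : E => (2 * y.1 0 * y.1 3 - 2 * y.1 1 * y.1 2) + y.1 4 * y.1 4) _ x := ((((hQ 0 x).const_mul 2).mul (hQ 3 x)).sub
      (((hQ 1 x).const_mul 2).mul (hQ 2 x))).add ((hQ 4 x).mul (hQ 4 x))
  rw [hVeq, h.fderiv]
  simp [Q]
  ring

lemma hJ (i j : Fin 5) (x : E) :
    HasFDerivAt (J i j) (x.1 i • P j + x.2 j • Q i - (x.1 j • P i + x.2 i • Q j)) x :=
  ((hQ i x).mul (hP j x)).sub ((hQ j x).mul (hP i x))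

lemma dJ (i j : Fin 5) (x : E) (v : E) :
    fderiv ℝ (J i j) x v = x.1 i * v.2 j + x.2 j * v.1 i - x.1 j * v.2 i - x.2 i * v.1 j := by
  rw [(hJ i j x).fderiv]
  simp [Q, P]
  ring

lemma dMadd (i j k l : Fin 5) (x v : E) :
    fderiv ℝ (fun y => J i j y + J k l y) x v
      = fderiv ℝ (J i j) x v + fderiv ℝ (J k l) x v := by
  have h : HasFDerivAt (fun y => J i j y + J k l y) _ x := (hJ i j x).add (hJ k l x)
  rw [h.fderiv, (hJ i j x).fderiv, (hJ k l x).fderiv]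
  simp

lemma dMsub (i j k l : Fin 5) (x v : E) :
    fderiv ℝ (fun y => J i j y - J k l y) x v
      = fderiv ℝ (J i j) x v - fderiv ℝ (J k l) x v := by
  have h : HasFDerivAt (fun y => J i j y - J k l y) _ x := (hJ i j x).sub (hJ k l x)
  rw [h.fderiv, (hJ i j x).fderiv, (hJ k l x).fderiv]
  simp

lemma dM1 (x v : E) :
    fderiv ℝ M1 x v = (x.1 0 * v.2 1 + x.2 1 * v.1 0 - x.1 1 * v.2 0 - x.2 0 * v.1 1)
      + (x.1 2 * v.2 3 + x.2 3 * v.1 2 - x.1 3 * v.2 2 - x.2 2 * v.1 3) := by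
  have h : HasFDerivAt M1 _ x := (hJ 0 1 x).add (hJ 2 3 x)
  rw [h.fderiv]; simp [Q, P]; ring

lemma dM2 (x v : E) :
    fderiv ℝ M2 x v = (x.1 0 * v.2 2 + x.2 2 * v.1 0 - x.1 2 * v.2 0 - x.2 0 * v.1 2)
      + (x.1 1 * v.2 3 + x.2 3 * v.1 1 - x.1 3 * v.2 1 - x.2 1 * v.1 3) := by
  have h : HasFDerivAt M2 _ x := (hJ 0 2 x).add (hJ 1 3 x)
  rw [h.fderiv]; simp [Q, P]; ring

lemma dM3 (x v : E) :
    fderiv ℝ M3 x v = (x.1 1 * v.2 4 + x.2 4 * v.1 1 - x.1 4 * v.2 1 - x.2 1 * v.1 4)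
      - (x.1 2 * v.2 4 + x.2 4 * v.1 2 - x.1 4 * v.2 2 - x.2 2 * v.1 4) := by
  have h : HasFDerivAt M3 _ x := (hJ 1 4 x).sub (hJ 2 4 x)
  rw [h.fderiv]; simp [Q, P]; ring

lemma dM4 (x v : E) :
    fderiv ℝ M4 x v = (x.1 0 * v.2 4 + x.2 4 * v.1 0 - x.1 4 * v.2 0 - x.2 0 * v.1 4)
      + (x.1 3 * v.2 4 + x.2 4 * v.1 3 - x.1 4 * v.2 3 - x.2 3 * v.1 4) := by
  have h : HasFDerivAt M4 _ x := (hJ 0 4 x).add (hJ 3 4 x)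
  rw [h.fderiv]; simp [Q, P]; ring

lemma sgl (i k : Fin 5) : Pi.single (M := fun _ => ℝ) i 1 k = if k = i then 1 else 0 := by
  rcases eq_or_ne k i with h | h
  · subst h; simp
  · simp [Pi.single_eq_of_ne h, h]

end aux

open aux in
theorem V2_invariant_E5 :
    (∀ x, pb V2 M1 x = 0) ∧ (∀ x, pb V2 M2 x = 0) ∧
    (∀ x, pb V2 M3 x = 0) ∧ (∀ x, pb V2 M4 x = 0) := by
  refine ⟨fun x => ?_, fun x => ?_, fun x => ?_, fun x => ?_⟩ <;>
  · simp only [pb, dV, dM1, dM2, dM3, dM4, Fin.sum_univ_five,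
      Prod.fst_zero, Prod.snd_zero, Pi.zero_apply]
    simp [Pi.single_apply]
    ring
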